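/- Expression evaluation is monotone along Power runs: if in a reachable state of the Power automaton the evaluation eval(t, i, e) of an expression e at instruction index i of thread t yields a value v ≠ ⊥, then after any further transition eval(t, i, e) still yields v. -/

import Mathlib

/-! A formalization of the (corrected) operational Power memory model of
Sarkar et al., following "Lazy TSO Reachability"-style conventions:
programs are finite families of thread automata over commands; the Power
semantics is a labeled transition system over runtime thread states and a
storage-subsystem state, with fetch / load / commit / propagate events. -/

namespace PowerModel

/-- Values and addresses come from a common domain, here `ℕ` (containing `0`). -/
abbrev Val := ℕ
/-- Register names. -/
abbrev Reg := ℕ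

/-- Expressions over constants, registers and (binary) functions on the domain;
functions return `⊥` iff some argument is `⊥`, which is realized by `Option`-strictness
in the evaluator. -/
inductive Expr : Type
  | const : Val → Expr
  | reg : Reg → Expr
  | fn : (Val → Val → Val) → Expr → Expr → Expr

/-- Commands: loads, stores, local assignments and conditionals. -/
inductive Cmd : Type
  | load : Reg → Expr → Cmd
  | store : Expr → Expr → Cmd
  | assign : Reg → Expr → Cmd
  | assume_ : Expr → Cmd

def Cmd.isLoad : Cmd → Prop
  | .load _ _ => True
  | _ => False

def Cmd.isStore : Cmd → Prop
  | .store _ _ => True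
  | _ => False

def Cmd.isMem : Cmd → Prop
  | .load _ _ => True
  | .store _ _ => True
  | _ => False

/-- An instruction of a thread automaton: source control state, command,
destination control state. -/
structure Instr where
  src : ℕ
  cmd : Cmd
  dst : ℕ

/-- A thread is an automaton over commands: an initial control state and a set of
instructions (all control states are final). -/
structure Thread where
  start : ℕ
  instrs : Set Instr

/-- A program with `n` threads. -/
abbrev Program (n : ℕ) := Fin n → Thread

/-- Identifier of a store: either the initial store to an address, or the `i`-th
fetched instruction of thread `t`. -/
inductive StoreId (n : ℕ) : Type
  | init : Val → StoreId n
  | st : Fin n → ℕ → StoreId n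

/-- Runtime state of a thread: the sequence of fetched instructions, the set of
indices of committed instructions, and for every satisfied load its source store
together with the value read. -/
structure TState (n : ℕ) where
  fetched : List Instr
  committed : Set ℕ
  loaded : ℕ → Option (StoreId n × Val)

/-- Does the command write to register `r`? -/
def Cmd.writesTo : Cmd → Reg → Bool
  | .load r _, r' => r == r'
  | .assign r _, r' => r == r'
  | _, _ => false

/-- Index of the last instruction before position `i` writing to register `r`. -/
def lastWrite (f : List Instr) (i : ℕ) (r : Reg) : Option ℕ :=
  (List.range i).reverse.find? (fun j =>
    match f[j]? with
    | some ins => ins.cmd.writesTo r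
    | none => false)

/-- Evaluate an expression given a (partial) register valuation; strict in `⊥`. -/
def evalWith (ρ : Reg → Option Val) : Expr → Option Val
  | .const v => some v
  | .reg r => ρ r
  | .fn g e₁ e₂ => (evalWith ρ e₁).bind fun a => (evalWith ρ e₂).map fun b => g a b

/-- Value of register `r` right before the `i`-th fetched instruction
(`fuel`-bounded recursion; the chain of defining instructions strictly decreases,
so `fuel = i + 1` computes the true value). `none` is `⊥`. -/
def regV {n : ℕ} (f : List Instr) (ld : ℕ → Option (StoreId n × Val)) :
    ℕ → ℕ → Reg → Option Val
  | 0, _, _ => none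
  | fuel + 1, i, r =>
    match lastWrite f i r with
    | none => some 0
    | some i' =>
      match f[i']? with
      | some ins =>
        match ins.cmd with
        | .assign _ e => evalWith (fun r' => regV f ld fuel i' r') e
        | .load _ _ => (ld i').map Prod.snd
        | _ => none
      | none => none

/-- Evaluation of expression `e` at the `i`-th fetched instruction of a thread. -/
def evalE {n : ℕ} (f : List Instr) (ld : ℕ → Option (StoreId n × Val))
    (i : ℕ) (e : Expr) : Option Val :=
  evalWith (fun r => regV f ld (i + 1) i r) e

namespace TState

variable {n : ℕ}

def eval (ts : TState n) (i : ℕ) (e : Expr) : Option Val :=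
  evalE ts.fetched ts.loaded i e

def cmdAt (ts : TState n) (i : ℕ) : Option Cmd :=
  (ts.fetched[i]?).map Instr.cmd

/-- Address argument of the `i`-th fetched instruction (`none` = `⊥` or `⊤`). -/
def getaddr (ts : TState n) (i : ℕ) : Option Val :=
  match ts.cmdAt i with
  | some (.load _ ea) => ts.eval i ea
  | some (.store ea _) => ts.eval i ea
  | _ => none

/-- Value argument of the `i`-th fetched instruction (`none` = `⊥` or `⊤`). -/
def getvalue (ts : TState n) (i : ℕ) : Option Val :=
  match ts.cmdAt i with
  | some (.store _ ev) => ts.eval i ev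
  | some (.assign _ ev) => ts.eval i ev
  | some (.assume_ ev) => ts.eval i ev
  | _ => none

end TState

/-- Dependencies of an expression via a register-dependency oracle. -/
def exprDepsWith (ρ : Reg → Set ℕ) : Expr → Set ℕ
  | .const _ => ∅
  | .reg r => ρ r
  | .fn _ e₁ e₂ => exprDepsWith ρ e₁ ∪ exprDepsWith ρ e₂

/-- Indices of the instructions on which the value of register `r` before position `i`
depends (loads and, transitively through assignments, their dependencies). -/
def regDeps (f : List Instr) : ℕ → ℕ → Reg → Set ℕ
  | 0, _, _ => ∅
  | fuel + 1, i, r =>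
    match lastWrite f i r with
    | none => ∅
    | some i' =>
      {i'} ∪
        (match f[i']? with
         | some ins =>
           match ins.cmd with
           | .assign _ e => exprDepsWith (fun r' => regDeps f fuel i' r') e
           | _ => ∅
         | none => ∅)

def exprDeps (f : List Instr) (i : ℕ) (e : Expr) : Set ℕ :=
  exprDepsWith (fun r => regDeps f (i + 1) i r) e

namespace TState

variable {n : ℕ}

/-- Address dependencies of the `i`-th fetched instruction. -/
def addrDeps (ts : TState n) (i : ℕ) : Set ℕ :=
  match ts.cmdAt i with
  | some (.load _ ea) => exprDeps ts.fetched i ea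
  | some (.store ea _) => exprDeps ts.fetched i ea
  | _ => ∅

/-- Data dependencies of the `i`-th fetched instruction. -/
def dataDeps (ts : TState n) (i : ℕ) : Set ℕ :=
  match ts.cmdAt i with
  | some (.store _ ev) => exprDeps ts.fetched i ev
  | some (.assign _ ev) => exprDeps ts.fetched i ev
  | some (.assume_ ev) => exprDeps ts.fetched i ev
  | _ => ∅

/-- Control dependencies: all earlier fetched conditionals. -/
def ctrlDeps (ts : TState n) (i : ℕ) : Set ℕ :=
  {i' | i' < i ∧ ∃ e, ts.cmdAt i' = some (.assume_ e)}

end TState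

/-- State of the storage subsystem: coherence keys of committed stores, and for each
thread and address the last store propagated to that thread. -/
structure SState (n : ℕ) where
  coh : Fin n → ℕ → Option ℚ
  propTo : Fin n → Val → StoreId n

/-- Coherence key of a store (initial stores have key `0`). -/
def SState.keyOf {n : ℕ} (ss : SState n) : StoreId n → ℚ
  | .init _ => 0
  | .st t i => (ss.coh t i).getD 0

/-- A state of the Power automaton. -/
structure PState (n : ℕ) where
  rt : Fin n → TState n
  ss : SState n

/-- Value written by a store, computed in the thread that issued it
(initial stores write `0`). -/
def storeVal {n : ℕ} (s : PState n) : StoreId n → Option Val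
  | .init _ => some 0
  | .st t i => (s.rt t).getvalue i

/-- Events of the Power semantics. -/
inductive Event (n : ℕ) : Type
  | fetch : Fin n → ℕ → Instr → Event n
  | load : Fin n → ℕ → Val → Event n
  | commit : Fin n → ℕ → Event n
  | commitStore : Fin n → ℕ → ℚ → Val → Event n
  | prop : Fin n → Fin n → ℕ → Val → Event n

/-- The instruction (thread id, fetch index) an event belongs to. -/
def Event.instrOf {n : ℕ} : Event n → Fin n × ℕ
  | .fetch t i _ => (t, i)
  | .load t i _ => (t, i)
  | .commit t i => (t, i)
  | .commitStore t i _ _ => (t, i)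
  | .prop _ t' i _ => (t', i)

/-- Common preconditions for committing the `i`-th fetched instruction of thread `t`:
it is fetched, not yet committed, all its address, data and control dependencies are
committed, and (for memory accesses) all earlier fetched accesses to the same or to a
still-unknown address are committed. -/
def canCommit {n : ℕ} (s : PState n) (t : Fin n) (i : ℕ) : Prop :=
  i < (s.rt t).fetched.length ∧ i ∉ (s.rt t).committed ∧
  ((s.rt t).addrDeps i ∪ (s.rt t).dataDeps i ∪ (s.rt t).ctrlDeps i) ⊆ (s.rt t).committed ∧
  (∀ a, (s.rt t).getaddr i = some a →
    ∀ i' < i, (∃ c, (s.rt t).cmdAt i' = some c ∧ c.isMem) →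
      ((s.rt t).getaddr i' = none ∨ (s.rt t).getaddr i' = some a) →
      i' ∈ (s.rt t).committed)

/-- The transition relation of the Power automaton of a program. -/
inductive Step {n : ℕ} (P : Program n) : PState n → Event n → PState n → Prop
  /-- POW-FETCH -/
  | fetch {s : PState n} {t : Fin n} {ins : Instr} :
      ins ∈ (P t).instrs →
      ins.src = (match (s.rt t).fetched.getLast? with
                 | some lst => lst.dst
                 | none => (P t).start) →
      Step P s (.fetch t (s.rt t).fetched.length ins)
        { s with rt := (Function.update s.rt t
            { s.rt t with fetched := (s.rt t).fetched ++ [ins] }) }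
  /-- POW-LOAD: read from the last store propagated to the thread. -/
  | loadMem {s : PState n} {t : Fin n} {i : ℕ} {a v : Val} {w : StoreId n} :
      (∃ r ea, (s.rt t).cmdAt i = some (.load r ea)) →
      (s.rt t).loaded i = none →
      (s.rt t).getaddr i = some a →
      w = s.ss.propTo t a →
      storeVal s w = some v →
      Step P s (.load t i a)
        { s with rt := (Function.update s.rt t
            { s.rt t with loaded := Function.update (s.rt t).loaded i (some (w, v)) }) }
  /-- POW-EARLY: forward the value of the latest uncommitted program-order-earlier
  store to the same address. -/
  | loadEarly {s : PState n} {t : Fin n} {i i' : ℕ} {a v : Val} :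
      (∃ r ea, (s.rt t).cmdAt i = some (.load r ea)) →
      (s.rt t).loaded i = none →
      (s.rt t).getaddr i = some a →
      i' < i →
      (∃ ea ev, (s.rt t).cmdAt i' = some (.store ea ev)) →
      (s.rt t).getaddr i' = some a →
      (∀ j, i' < j → j < i → (∃ ea ev, (s.rt t).cmdAt j = some (.store ea ev)) →
        ¬((s.rt t).getaddr j = none ∨ (s.rt t).getaddr j = some a)) →
      (s.rt t).getvalue i' = some v →
      i' ∉ (s.rt t).committed →
      Step P s (.load t i a)
        { s with rt := (Function.update s.rt t
            { s.rt t with loaded := Function.update (s.rt t).loaded i (some (.st t i', v)) }) }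
  /-- POW-COMMIT (non-store instructions). -/
  | commitSimple {s : PState n} {t : Fin n} {i : ℕ} :
      canCommit s t i →
      (∀ c, (s.rt t).cmdAt i = some c → ¬ c.isStore) →
      (∀ r ea, (s.rt t).cmdAt i = some (.load r ea) →
        (s.rt t).loaded i ≠ none ∧ ∃ a, (s.rt t).getaddr i = some a) →
      (∀ r ev, (s.rt t).cmdAt i = some (.assign r ev) → ∃ v, (s.rt t).getvalue i = some v) →
      (∀ ev, (s.rt t).cmdAt i = some (.assume_ ev) →
        ∃ v, (s.rt t).getvalue i = some v ∧ v ≠ 0) →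
      Step P s (.commit t i)
        { s with rt := (Function.update s.rt t
            { s.rt t with committed := insert i (s.rt t).committed }) }
  /-- POW-STORE: commit a store, assigning it a fresh coherence key. -/
  | commitStore {s : PState n} {t : Fin n} {i : ℕ} {k : ℚ} {a v : Val} :
      canCommit s t i →
      (∃ ea ev, (s.rt t).cmdAt i = some (.store ea ev)) →
      (s.rt t).getaddr i = some a →
      (s.rt t).getvalue i = some v →
      (∀ t' i', s.ss.coh t' i' ≠ some k) →
      Step P s (.commitStore t i k a)
        ⟨Function.update s.rt t { s.rt t with committed := insert i (s.rt t).committed },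
         { s.ss with coh := (Function.update s.ss.coh t
             (Function.update (s.ss.coh t) i (some k))) }⟩
  /-- POW-PROP: propagate a committed store to a thread, provided it is
  coherence-order-later than the last store to this address propagated there. -/
  | propagate {s : PState n} {t t' : Fin n} {i' : ℕ} {a : Val} {k : ℚ} :
      s.ss.coh t' i' = some k →
      (∃ ea ev, (s.rt t').cmdAt i' = some (.store ea ev)) →
      (s.rt t').getaddr i' = some a →
      s.ss.keyOf (s.ss.propTo t a) < k →
      Step P s (.prop t t' i' a)
        { s with ss := ({ s.ss with propTo := (Function.update s.ss.propTo t
            (Function.update (s.ss.propTo t) a (.st t' i'))) }) }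

/-- Multi-step runs, recording the produced event sequence. -/
inductive Run {n : ℕ} (P : Program n) : PState n → List (Event n) → PState n → Prop
  | refl (s : PState n) : Run P s [] s
  | step {s s' s'' : PState n} {e : Event n} {σ : List (Event n)} :
      Step P s e s' → Run P s' σ s'' → Run P s (e :: σ) s''

/-- The initial state of the Power automaton. -/
def initState (n : ℕ) : PState n :=
  ⟨fun _ => ⟨[], ∅, fun _ => none⟩, ⟨fun _ _ => none, fun _ a => .init a⟩⟩

/-- Final states: all fetched instructions are committed (FIN-COMM), loads of a common
address agree with the coherence order (FIN-LD), and loads agree with program-order-earlier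
stores of the same thread to the same address (FIN-LD-ST). -/
def FinalState {n : ℕ} (s : PState n) : Prop :=
  ∀ t : Fin n,
    (∀ i, i < (s.rt t).fetched.length ↔ i ∈ (s.rt t).committed) ∧
    (∀ i i' a, i' < i →
      (s.rt t).getaddr i = some a → (s.rt t).getaddr i' = some a →
      (∃ r ea, (s.rt t).cmdAt i = some (.load r ea)) →
      (∃ r ea, (s.rt t).cmdAt i' = some (.load r ea)) →
      ∀ w v w' v', (s.rt t).loaded i = some (w, v) → (s.rt t).loaded i' = some (w', v') →
        s.ss.keyOf w' ≤ s.ss.keyOf w) ∧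
    (∀ i i' a, i' < i →
      (s.rt t).getaddr i = some a → (s.rt t).getaddr i' = some a →
      (∃ r ea, (s.rt t).cmdAt i = some (.load r ea)) →
      (∃ ea ev, (s.rt t).cmdAt i' = some (.store ea ev)) →
      ∀ w v, (s.rt t).loaded i = some (w, v) →
        s.ss.keyOf (.st t i') ≤ s.ss.keyOf w)

/-- A store-commit event is immediately followed by the propagation of that store
to its own thread. -/
def ImmediateProp {n : ℕ} (σ : List (Event n)) : Prop :=
  ∀ σ₁ (t : Fin n) (i : ℕ) (k : ℚ) (a : Val) σ₂,
    σ = σ₁ ++ Event.commitStore t i k a :: σ₂ →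
    ∃ σ₃, σ₂ = Event.prop t t i a :: σ₃

/-- The set of Power computations of a program. -/
def CPower {n : ℕ} (P : Program n) : Set (List (Event n)) :=
  {σ | ∃ s, Run P (initState n) σ s ∧ FinalState s ∧ ImmediateProp σ}

end PowerModel

namespace PowerModel

lemma find?_congr' {α} (p q : α → Bool) : ∀ l : List α, (∀ x ∈ l, p x = q x) →
    l.find? p = l.find? q := by
  intro l h
  induction l with
  | nil => rfl
  | cons a l ih =>
    rw [List.find?_cons, List.find?_cons, h a (by simp)]
    cases q a with
    | true => rfl
    | false => exact ih (fun x hx => h x (by simp [hx]))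

lemma lastWrite_lt {f : List Instr} {i i' : ℕ} {r : Reg}
    (h : lastWrite f i r = some i') : i' < i := by
  have := List.mem_of_find?_eq_some h
  simpa using this

lemma regV_append {n : ℕ} (f : List Instr) (ins : Instr)
    (ld : ℕ → Option (StoreId n × Val)) :
    ∀ fuel i r, i ≤ f.length →
      regV (f ++ [ins]) ld fuel i r = regV f ld fuel i r := by
  intro fuel
  induction fuel with
  | zero => intros; rfl
  | succ fuel ih =>
    intro i r hi
    have hlw : lastWrite (f ++ [ins]) i r = lastWrite f i r := by
      unfold lastWrite
      apply find?_congr'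
      intro j hj
      have hj' : j < i := by simpa using hj
      rw [List.getElem?_append_left (lt_of_lt_of_le hj' hi)]
    unfold regV
    rw [hlw]
    cases hlw' : lastWrite f i r with
    | none => rfl
    | some i' =>
      have hi' : i' < i := lastWrite_lt hlw'
      dsimp only
      rw [List.getElem?_append_left (lt_of_lt_of_le hi' hi)]
      cases f[i']? with
      | none => rfl
      | some ins' =>
        dsimp only
        cases ins'.cmd with
        | assign r' e =>
          dsimp only
          congr 1
          funext r''
          exact ih i' r'' (le_of_lt (lt_of_lt_of_le hi' hi))
        | _ => rfl

lemma evalWith_mono (ρ ρ' : Reg → Option Val)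
    (h : ∀ r v, ρ r = some v → ρ' r = some v) :
    ∀ e v, evalWith ρ e = some v → evalWith ρ' e = some v := by
  intro e
  induction e with
  | const c => intro v hv; exact hv
  | reg r => intro v hv; exact h r v hv
  | fn g e1 e2 ih1 ih2 =>
    intro v hv
    simp only [evalWith, Option.bind_eq_some_iff, Option.map_eq_some_iff] at hv ⊢
    obtain ⟨a, ha, b, hb, hv⟩ := hv
    exact ⟨a, ih1 a ha, b, ih2 b hb, hv⟩

lemma regV_mono {n : ℕ} (f : List Instr) (ld ld' : ℕ → Option (StoreId n × Val))
    (h : ∀ j p, ld j = some p → ld' j = some p) :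
    ∀ fuel i r v, regV f ld fuel i r = some v → regV f ld' fuel i r = some v := by
  intro fuel
  induction fuel with
  | zero => intro i r v hv; exact absurd hv (by simp [regV])
  | succ fuel ih =>
    intro i r v hv
    unfold regV at hv ⊢
    cases hlw : lastWrite f i r with
    | none => rw [hlw] at hv; exact hv
    | some i' =>
      rw [hlw] at hv
      dsimp only at hv ⊢
      cases hg : f[i']? with
      | none => rw [hg] at hv; exact hv
      | some ins =>
        rw [hg] at hv
        dsimp only at hv ⊢
        cases hc : ins.cmd with
        | assign r' e =>
          rw [hc] at hv
          dsimp only at hv ⊢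
          exact evalWith_mono _ _ (fun r'' v'' => ih i' r'' v'') e v hv
        | load r' ea =>
          rw [hc] at hv
          dsimp only at hv ⊢
          simp only [Option.map_eq_some_iff] at hv ⊢
          obtain ⟨p, hp, hv⟩ := hv
          exact ⟨p, h i' p hp, hv⟩
        | store ea ev => rw [hc] at hv; exact absurd hv (by simp)
        | assume_ ev => rw [hc] at hv; exact absurd hv (by simp)

lemma evalE_append {n : ℕ} (f : List Instr) (ins : Instr)
    (ld : ℕ → Option (StoreId n × Val)) (i : ℕ) (e : Expr) (hi : i ≤ f.length) :
    evalE (f ++ [ins]) ld i e = evalE f ld i e := by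
  unfold evalE
  congr 1
  funext r
  exact regV_append f ins ld (i + 1) i r hi

lemma evalE_mono {n : ℕ} (f : List Instr) (ld ld' : ℕ → Option (StoreId n × Val))
    (h : ∀ j p, ld j = some p → ld' j = some p) (i : ℕ) (e : Expr) (v : Val)
    (hv : evalE f ld i e = some v) : evalE f ld' i e = some v := by
  unfold evalE at hv ⊢
  exact evalWith_mono _ _ (fun r v' => regV_mono f ld ld' h (i + 1) i r v') e v hv

/-- expression evaluation is monotone along Power runs: if in a reachable
state the evaluation of expression `e` at the `i`-th fetched instruction of thread `t`
yields a value `v` (≠ ⊥), then after any further transition it still yields `v`. -/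
theorem eval_stable {n : ℕ} (P : Program n) (σ : List (Event n)) (s : PState n)
    (hreach : Run P (initState n) σ s)
    (t : Fin n) (i : ℕ) (e : Expr) (v : Val)
    (hi : i < (s.rt t).fetched.length)
    (h : (s.rt t).eval i e = some v)
    (e' : Event n) (s' : PState n) (hstep : Step P s e' s') :
    (s'.rt t).eval i e = some v := by
  cases hstep with
  | @fetch t₀ ins _ _ =>
    by_cases ht : t = t₀
    · subst ht
      simp only [TState.eval, Function.update_self]
      exact (evalE_append _ ins _ i e (le_of_lt hi)).trans h
    · simpa [TState.eval, Function.update_of_ne ht] using h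
  | @loadMem t₀ j a vv w _ hnone _ _ _ =>
    by_cases ht : t = t₀
    · subst ht
      simp only [TState.eval, Function.update_self]
      refine evalE_mono _ _ _ ?_ i e v h
      intro j' p hp
      rcases eq_or_ne j' j with rfl | hne
      · rw [hnone] at hp; exact absurd hp (by simp)
      · rwa [Function.update_of_ne hne]
    · simpa [TState.eval, Function.update_of_ne ht] using h
  | @loadEarly t₀ j i' a vv _ hnone _ _ _ _ _ _ _ =>
    by_cases ht : t = t₀
    · subst ht
      simp only [TState.eval, Function.update_self]
      refine evalE_mono _ _ _ ?_ i e v h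
      intro j' p hp
      rcases eq_or_ne j' j with rfl | hne
      · rw [hnone] at hp; exact absurd hp (by simp)
      · rwa [Function.update_of_ne hne]
    · simpa [TState.eval, Function.update_of_ne ht] using h
  | @commitSimple t₀ j _ _ _ _ _ =>
    by_cases ht : t = t₀
    · subst ht; simpa [TState.eval, Function.update_self] using h
    · simpa [TState.eval, Function.update_of_ne ht] using h
  | @commitStore t₀ j k a vv _ _ _ _ _ =>
    by_cases ht : t = t₀
    · subst ht; simpa [TState.eval, Function.update_self] using h
    · simpa [TState.eval, Function.update_of_ne ht] using h
  | propagate _ _ _ _ => simpa [TState.eval] using h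

end PowerModel
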